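/- Let n be a nonnegative integer and define T_n(a,b,c) = (1+a−c)_n (c)_n · _4F_3(−n, a/2, (a+1)/2, b ; a, 1+a−c, c ; 4), and U_n(x,y,z) = T_n( x−y−z, (1+3x−y−z−2n)/2, (1+x+y−3z)/2 ). Let x, y, z ∈ ℂ and assume that for every permutation (x',y',z') of (x,y,z), setting a' = x'−y'−z' and c' = (1+x'+y'−3z')/2, the rising factorials (a')_n, (1+a'−c')_n, and (c')_n are all nonzero. Then U_n(x,y,z) is invariant under all six permutations of (x,y,z); that is, U_n(x,y,z) = U_n(x,z,y) = U_n(y,x,z) = U_n(y,z,x) = U_n(z,x,y) = U_n(z,y,x). -/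

import Mathlib

open Finset

/-- The rising factorial (Pochhammer symbol) `(a)_k = a(a+1)⋯(a+k-1)`. -/
noncomputable def poch (a : ℂ) (k : ℕ) : ℂ := ∏ i ∈ Finset.range k, (a + i)

/-- `T n a b c = (1+a-c)_n (c)_n · ₄F₃(-n, a/2, (a+1)/2, b ; a, 1+a-c, c ; 4)`. -/
noncomputable def T (n : ℕ) (a b c : ℂ) : ℂ :=
  poch (1 + a - c) n * poch c n *
    ∑ k ∈ Finset.range (n + 1),
      (poch (-(n : ℂ)) k * poch (a / 2) k * poch ((a + 1) / 2) k * poch b k) /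
        ((Nat.factorial k : ℂ) * poch a k * poch (1 + a - c) k * poch c k) * (4 : ℂ) ^ k

/-- `U n x y z = T n (x-y-z) ((1+3x-y-z-2n)/2) ((1+x+y-3z)/2)`. -/
noncomputable def U (n : ℕ) (x y z : ℂ) : ℂ :=
  T n (x - y - z) ((1 + 3 * x - y - z - 2 * (n : ℂ)) / 2) ((1 + x + y - 3 * z) / 2)




lemma poch_zero (a : ℂ) : poch a 0 = 1 := by simp [poch]

lemma poch_succ (a : ℂ) (k : ℕ) : poch a (k+1) = poch a k * (a + k) :=
  Finset.prod_range_succ _ _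

lemma poch_add (a : ℂ) (m k : ℕ) : poch a (m+k) = poch a m * poch (a + m) k := by
  induction k with
  | zero => simp [poch]
  | succ k ih =>
    rw [show m + (k+1) = (m+k)+1 from rfl, poch_succ, ih, poch_succ]
    push_cast; ring

lemma poch_succ_front (a : ℂ) (k : ℕ) : poch a (k+1) = a * poch (a+1) k := by
  rw [show k+1 = 1+k by omega, poch_add]
  simp [poch]

lemma poch_ne_zero_of_le {a : ℂ} {n : ℕ} (h : poch a n ≠ 0) {k : ℕ} (hk : k ≤ n) :
    poch a k ≠ 0 := by
  rw [show n = k + (n - k) by omega, poch_add] at h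
  exact fun h0 => h (by rw [h0, zero_mul])

lemma poch_half (a : ℂ) (k : ℕ) :
    poch (a/2) k * poch ((a+1)/2) k * 4^k = poch a (2*k) := by
  induction k with
  | zero => simp [poch]
  | succ k ih =>
    rw [poch_succ (a/2), poch_succ ((a+1)/2), pow_succ,
      show 2*(k+1) = 2*k+1+1 from rfl, poch_succ a, poch_succ a, ← ih]
    push_cast; ring

lemma poch_neg_nat (n k : ℕ) : poch (-(n:ℂ)) k = (-1)^k * (n.descFactorial k : ℂ) := by
  induction k with
  | zero => simp [poch]
  | succ k ih =>
    rw [poch_succ, ih, Nat.descFactorial_succ]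
    rcases lt_or_ge k n with h | h
    · push_cast [Nat.cast_sub h.le]; ring
    · rcases eq_or_lt_of_le h with rfl | h'
      · simp
      · rw [Nat.descFactorial_eq_zero_iff_lt.2 h']
        simp

lemma poch_reflect (b : ℂ) (k : ℕ) : poch (1 - b - k) k = (-1)^k * poch b k := by
  unfold poch
  rw [← Finset.prod_range_reflect]
  rw [show ((-1:ℂ))^k = ∏ _i ∈ Finset.range k, (-1:ℂ) by simp, ← Finset.prod_mul_distrib]
  refine Finset.prod_congr rfl fun i hi => ?_
  simp only [Finset.mem_range] at hi
  have : ((k - 1 - i : ℕ) : ℂ) = (k:ℂ) - 1 - i := by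
    have h1 : k - 1 - i = k - (1 + i) := by omega
    rw [h1, Nat.cast_sub (by omega)]; push_cast; ring
  rw [this]; ring
lemma poch_arg {a b : ℂ} (k : ℕ) (h : a = b) : poch a k = poch b k := by rw [h]
lemma vander (m : ℕ) : ∀ β γ : ℂ, poch (β + γ - 1 + m) m
    = ∑ j ∈ Finset.range (m+1), (m.choose j : ℂ) * poch (β + j) (m - j) * poch (γ + m - j) j := by
  induction m with
  | zero => intro β γ; simp [poch]
  | succ m ih =>
    intro β γ
    set A : ℕ → ℂ := fun j => poch (β + j) (m + 1 - j) * poch (γ + (m+1 : ℕ) - j) j with hA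
    have step1 : ∑ j ∈ Finset.range (m+2), ((m+1).choose j : ℂ) * poch (β + j) (m + 1 - j)
          * poch (γ + (m+1 : ℕ) - j) j
        = ∑ j ∈ Finset.range (m+1), (m.choose j : ℂ) * (A j + A (j+1)) := by
      have e1 : ∀ j, ((m+1).choose j : ℂ) * poch (β + j) (m + 1 - j)
          * poch (γ + (m+1 : ℕ) - j) j = ((m+1).choose j : ℂ) * A j := fun j => by
        rw [hA]; ring
      simp only [e1]
      rw [Finset.sum_range_succ' (fun j => ((m+1).choose j : ℂ) * A j) (m+1)]
      have e2 : ∀ j, ((m+1).choose (j+1) : ℂ) = (m.choose j : ℂ) + (m.choose (j+1) : ℂ) := by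
        intro j; rw [Nat.choose_succ_succ]; push_cast; ring
      simp only [e2, add_mul]
      rw [Finset.sum_add_distrib]
      have e3 : (∑ j ∈ Finset.range (m+1), (m.choose (j+1) : ℂ) * A (j+1))
            + ((m+1).choose 0 : ℂ) * A 0
          = ∑ j ∈ Finset.range (m+1), (m.choose j : ℂ) * A j := by
        rw [show ((m+1).choose 0 : ℂ) = ((m.choose 0 : ℕ) : ℂ) by simp]
        rw [← Finset.sum_range_succ' (fun j => (m.choose j : ℂ) * A j) (m+1)]
        rw [Finset.sum_range_succ]
        simp [Nat.choose_succ_self]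
      rw [add_assoc, e3]
      rw [← Finset.sum_add_distrib]
      refine Finset.sum_congr rfl fun j _ => by ring
    rw [step1]
    have step2 : ∀ j ∈ Finset.range (m+1), (m.choose j : ℂ) * (A j + A (j+1))
        = (β + γ + m) * ((m.choose j : ℂ) * poch ((β+1) + j) (m - j) * poch ((γ+1) + m - j) j) := by
      intro j hj
      simp only [Finset.mem_range] at hj
      have hj' : j ≤ m := by omega
      have eAj : A j = (β + j) * poch ((β+1) + j) (m - j) * poch ((γ+1) + m - j) j := by
        rw [hA]
        simp only
        rw [show m + 1 - j = (m - j) + 1 by omega, poch_succ_front]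
        rw [poch_arg (m-j) (show β + (j:ℕ) + 1 = (β+1) + j by ring)]
        rw [poch_arg j (show γ + ((m+1 : ℕ) : ℂ) - j = (γ+1) + m - j by push_cast; ring)]
      have eAj1 : A (j+1) = (γ + m - j) * poch ((β+1) + j) (m - j) * poch ((γ+1) + m - j) j := by
        rw [hA]
        simp only
        rw [show m + 1 - (j+1) = m - j by omega]
        rw [poch_arg (m-j) (show β + ((j:ℕ)+1 : ℕ) = (β+1) + j by push_cast; ring)]
        rw [show (j+1 : ℕ) = (j:ℕ)+1 from rfl, poch_succ_front]
        rw [poch_arg j (show γ + ((m+1 : ℕ) : ℂ) - ((j:ℕ)+1 : ℕ) + 1 = (γ+1) + m - j by push_cast; ring)]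
        rw [show (γ + ((m+1:ℕ):ℂ) - ((j:ℕ)+1:ℕ)) = γ + m - j by push_cast; ring]
        ring
      rw [eAj, eAj1]; ring
    rw [Finset.sum_congr rfl step2, ← Finset.mul_sum, ← ih (β+1) (γ+1)]
    rw [poch_arg m (show (β+1) + (γ+1) - 1 + m = (β + γ + m) + 1 by ring)]
    rw [← poch_succ_front]
    exact poch_arg (m+1) (by push_cast; ring)

lemma core_n (n m : ℕ) (hm : m ≤ n) (β γ : ℂ) :
    poch (β + γ - 1 + m) m * poch (β + m) (n - m) * poch (γ + m) (n - m)
      = ∑ j ∈ Finset.range (m+1),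
          (m.choose j : ℂ) * poch (β + j) (n - j) * poch (γ + m - j) (n - (m - j)) := by
  rw [vander, Finset.sum_mul, Finset.sum_mul]
  refine Finset.sum_congr rfl fun j hj => ?_
  simp only [Finset.mem_range] at hj
  have hj' : j ≤ m := by omega
  have e1 : poch (β + j) (n - j) = poch (β + j) (m - j) * poch (β + m) (n - m) := by
    rw [show n - j = (m - j) + (n - m) by omega, poch_add]
    rw [poch_arg (n-m) (show β + (j:ℕ) + ((m - j : ℕ):ℂ) = β + m by
      rw [Nat.cast_sub hj']; ring)]
  have e2 : poch (γ + m - j) (n - (m - j)) = poch (γ + m - j) j * poch (γ + m) (n - m) := by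
    rw [show n - (m - j) = j + (n - m) by omega, poch_add]
    rw [poch_arg (n-m) (show γ + (m:ℕ) - j + ((j:ℕ):ℂ) = γ + m by ring)]
  rw [e1, e2]; ring

lemma choose_trinom {n k j : ℕ} (h : k + j ≤ n) :
    n.choose k * (n-k).choose j = n.choose j * (n-j).choose k := by
  have h1 := Nat.choose_mul (n := n) (show k ≤ k + j by omega)
  have h2 := Nat.choose_mul (n := n) (show j ≤ k + j by omega)
  rw [show k + j - k = j by omega] at h1
  rw [show k + j - j = k by omega] at h2
  have h3 : (k+j).choose k = (k+j).choose j := by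
    rw [← Nat.choose_symm (show j ≤ k + j by omega), show k + j - j = k by omega]
  rw [← h1, ← h2, h3]

/-- symmetric triple-sum form -/
noncomputable def SymT (n : ℕ) (α β γ : ℂ) : ℂ :=
  ∑ k ∈ Finset.range (n+1), ∑ j ∈ Finset.range (n+1-k),
    ((n.choose k * (n-k).choose j : ℕ) : ℂ) * poch (α + k) (n - k) * poch (β + j) (n - j)
      * poch (γ + ((n - k - j : ℕ) : ℂ)) (n - (n - k - j))

/-- single-sum form -/
noncomputable def Wf (n : ℕ) (α β γ : ℂ) : ℂ :=
  ∑ k ∈ Finset.range (n+1), (n.choose k : ℂ) * poch (α + n - k) k * poch (β + γ - 1 + k) k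
    * poch (β + k) (n - k) * poch (γ + k) (n - k)

lemma SymT_swap23 (n : ℕ) (α β γ : ℂ) : SymT n α β γ = SymT n α γ β := by
  unfold SymT
  refine Finset.sum_congr rfl fun k hk => ?_
  simp only [Finset.mem_range] at hk
  have hk' : k ≤ n := by omega
  rw [show n + 1 - k = (n - k) + 1 by omega]
  rw [← Finset.sum_range_reflect]
  refine Finset.sum_congr rfl fun j hj => ?_
  simp only [Finset.mem_range] at hj
  have hj' : j ≤ n - k := by omega
  rw [show n - k + 1 - 1 - j = n - k - j by omega]
  rw [show n - k - (n - k - j) = j by omega]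
  rw [show (n-k).choose (n - k - j) = (n-k).choose j from by
    rw [← Nat.choose_symm hj']]
  ring

lemma tri_to_rect (n : ℕ) (F : ℕ → ℕ → ℂ) :
    ∑ k ∈ Finset.range (n+1), ∑ j ∈ Finset.range (n+1-k), F k j
      = ∑ k ∈ Finset.range (n+1), ∑ j ∈ Finset.range (n+1),
          if k + j ≤ n then F k j else 0 := by
  refine Finset.sum_congr rfl fun k hk => ?_
  rw [Finset.sum_ite, Finset.sum_const_zero, add_zero]
  apply Finset.sum_congr
  · ext j; simp only [Finset.mem_filter, Finset.mem_range]; omega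
  · intros; rfl

lemma SymT_swap12 (n : ℕ) (α β γ : ℂ) : SymT n α β γ = SymT n β α γ := by
  unfold SymT
  rw [tri_to_rect, tri_to_rect, Finset.sum_comm]
  refine Finset.sum_congr rfl fun k _ => Finset.sum_congr rfl fun j _ => ?_
  by_cases hkj : k + j ≤ n
  · rw [if_pos hkj, if_pos (by omega)]
    rw [show n - j - k = n - k - j by omega]
    rw [show n.choose j * (n-j).choose k = n.choose k * (n-k).choose j from
      (choose_trinom (by omega)).symm]
    ring
  · rw [if_neg hkj, if_neg (by omega)]

lemma Wf_eq_SymT (n : ℕ) (α β γ : ℂ) : Wf n α β γ = SymT n α β γ := by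
  unfold Wf SymT
  rw [← Finset.sum_range_reflect
    (fun k => ∑ j ∈ Finset.range (n+1-k),
      ((n.choose k * (n-k).choose j : ℕ) : ℂ) * poch (α + k) (n - k) * poch (β + j) (n - j)
        * poch (γ + ((n - k - j : ℕ) : ℂ)) (n - (n - k - j))) (n+1)]
  refine Finset.sum_congr rfl fun k hk => ?_
  simp only [Finset.mem_range] at hk
  have hk' : k ≤ n := by omega
  rw [show n + 1 - 1 - k = n - k by omega]
  rw [show n + 1 - (n - k) = k + 1 by omega]
  have key : poch (β + γ - 1 + k) k * poch (β + k) (n - k) * poch (γ + k) (n - k)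
      = ∑ j ∈ Finset.range (k+1),
          (k.choose j : ℂ) * poch (β + j) (n - j) * poch (γ + k - j) (n - (k - j)) :=
    core_n n k hk' β γ
  calc (n.choose k : ℂ) * poch (α + n - k) k * poch (β + γ - 1 + k) k
        * poch (β + k) (n - k) * poch (γ + k) (n - k)
      = (n.choose k : ℂ) * poch (α + n - k) k
        * (poch (β + γ - 1 + k) k * poch (β + k) (n - k) * poch (γ + k) (n - k)) := by ring
    _ = ∑ j ∈ Finset.range (k+1), (n.choose k : ℂ) * poch (α + n - k) k
          * ((k.choose j : ℂ) * poch (β + j) (n - j) * poch (γ + k - j) (n - (k - j))) := by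
        rw [key, Finset.mul_sum]
    _ = _ := by
        refine Finset.sum_congr rfl fun j hj => ?_
        simp only [Finset.mem_range] at hj
        have hj' : j ≤ k := by omega
        rw [show n - (n - k) = k by omega]
        rw [Nat.choose_symm hk']
        rw [poch_arg k (show α + ((n - k : ℕ):ℂ) = α + n - k by
          rw [Nat.cast_sub hk']; ring)]
        rw [poch_arg (n - (k - j)) (show γ + ((k - j : ℕ):ℂ) = γ + k - j by
          rw [Nat.cast_sub hj']; ring)]
        push_cast
        ring

lemma T_eq_Wf (n : ℕ) (α β γ : ℂ)
    (ha : poch (β + γ - 1) n ≠ 0) (hb : poch β n ≠ 0) (hc : poch γ n ≠ 0) :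
    T n (β + γ - 1) (1 - n - α) γ = Wf n α β γ := by
  unfold T Wf
  rw [poch_arg n (show 1 + (β + γ - 1) - γ = β by ring)]
  have hrw : ∀ k ∈ Finset.range (n+1),
      poch β n * poch γ n *
        ((poch (-(n : ℂ)) k * poch ((β + γ - 1) / 2) k * poch ((β + γ - 1 + 1) / 2) k
            * poch (1 - n - α) k) /
          ((Nat.factorial k : ℂ) * poch (β + γ - 1) k * poch (1 + (β + γ - 1) - γ) k
            * poch γ k) * (4 : ℂ) ^ k)
      = (n.choose k : ℂ) * poch (α + n - k) k * poch (β + γ - 1 + k) k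
          * poch (β + k) (n - k) * poch (γ + k) (n - k) := by
    intro k hk
    simp only [Finset.mem_range] at hk
    have hk' : k ≤ n := by omega
    rw [poch_arg k (show 1 + (β + γ - 1) - γ = β by ring)]
    rw [poch_arg k (show (β + γ - 1 + 1) / 2 = (β + γ) / 2 by ring)]
    have hfac : (Nat.factorial k : ℂ) ≠ 0 := by
      exact_mod_cast Nat.factorial_ne_zero k
    have hak : poch (β + γ - 1) k ≠ 0 := poch_ne_zero_of_le ha hk'
    have hbk : poch β k ≠ 0 := poch_ne_zero_of_le hb hk'
    have hck : poch γ k ≠ 0 := poch_ne_zero_of_le hc hk'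
    have hβn : poch β n = poch β k * poch (β + k) (n - k) := by
      rw [← poch_add, Nat.add_sub_cancel' hk']
    have hγn : poch γ n = poch γ k * poch (γ + k) (n - k) := by
      rw [← poch_add, Nat.add_sub_cancel' hk']
    have expand : poch (-(n : ℂ)) k * poch ((β + γ - 1) / 2) k * poch ((β + γ) / 2) k
          * poch (1 - n - α) k * (4:ℂ)^k
        = (Nat.factorial k : ℂ) * (n.choose k : ℂ) * poch (β + γ - 1) k
          * poch (β + γ - 1 + k) k * poch (α + n - k) k := by
      have e1 : poch ((β + γ - 1) / 2) k * poch ((β + γ) / 2) k * (4:ℂ)^k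
          = poch (β + γ - 1) k * poch (β + γ - 1 + k) k := by
        have h0 := poch_half (β + γ - 1) k
        rw [poch_arg k (show (β + γ - 1 + 1) / 2 = (β + γ) / 2 by ring)] at h0
        rw [h0, two_mul, poch_add]
      have e2 : poch (-(n : ℂ)) k = (-1)^k * ((Nat.factorial k : ℂ) * (n.choose k : ℂ)) := by
        rw [poch_neg_nat, Nat.descFactorial_eq_factorial_mul_choose]
        push_cast; ring
      have e3 : poch (α + n - k) k = (-1)^k * poch (1 - n - α) k := by
        rw [poch_arg k (show α + (n:ℂ) - k = 1 - (1 - (n:ℂ) - α) - k by ring), poch_reflect]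
      calc poch (-(n : ℂ)) k * poch ((β + γ - 1) / 2) k * poch ((β + γ) / 2) k
            * poch (1 - n - α) k * (4:ℂ)^k
          = ((-1)^k * ((Nat.factorial k : ℂ) * (n.choose k : ℂ)))
            * (poch ((β + γ - 1) / 2) k * poch ((β + γ) / 2) k * (4:ℂ)^k)
            * poch (1 - n - α) k := by rw [← e2]; ring
        _ = ((-1)^k * ((Nat.factorial k : ℂ) * (n.choose k : ℂ)))
            * (poch (β + γ - 1) k * poch (β + γ - 1 + k) k) * poch (1 - n - α) k := by
              rw [e1]
        _ = (Nat.factorial k : ℂ) * (n.choose k : ℂ) * poch (β + γ - 1) k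
            * poch (β + γ - 1 + k) k * ((-1)^k * poch (1 - n - α) k) := by ring
        _ = _ := by rw [← e3]
    rw [hβn, hγn]
    field_simp
    linear_combination (poch (β + k) (n - k) * poch (γ + k) (n - k)) * expand
  rw [Finset.mul_sum]
  exact Finset.sum_congr rfl hrw

lemma U_eq (n : ℕ) (x y z : ℂ)
    (h1 : poch (x - y - z) n ≠ 0)
    (h2 : poch (1 + (x - y - z) - (1 + x + y - 3 * z) / 2) n ≠ 0)
    (h3 : poch ((1 + x + y - 3 * z) / 2) n ≠ 0) :
    U n x y z
      = SymT n ((1 + y + z - 3 * x)/2) ((1 + x - 3 * y + z)/2) ((1 + x + y - 3 * z)/2) := by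
  have ea : x - y - z = (1 + x - 3 * y + z)/2 + (1 + x + y - 3 * z)/2 - 1 := by ring
  have eb : (1 + 3 * x - y - z - 2 * (n : ℂ)) / 2
      = 1 - (n:ℂ) - (1 + y + z - 3 * x)/2 := by ring
  have ha : poch ((1 + x - 3 * y + z)/2 + (1 + x + y - 3 * z)/2 - 1) n ≠ 0 := by
    rw [poch_arg n (show (1 + x - 3 * y + z)/2 + (1 + x + y - 3 * z)/2 - 1 = x - y - z by ring)]
    exact h1
  have hb : poch ((1 + x - 3 * y + z)/2) n ≠ 0 := by
    rw [poch_arg n (show (1 + x - 3 * y + z)/2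
      = 1 + (x - y - z) - (1 + x + y - 3 * z) / 2 by ring)]
    exact h2
  rw [U, ea, eb, T_eq_Wf n _ _ _ ha hb h3, Wf_eq_SymT]

theorem stmt_6 (n : ℕ) (x y z : ℂ)
    (h : ∀ p : ℂ × ℂ × ℂ,
      p ∈ ({(x, y, z), (x, z, y), (y, x, z), (y, z, x), (z, x, y), (z, y, x)} :
        Set (ℂ × ℂ × ℂ)) →
      poch (p.1 - p.2.1 - p.2.2) n ≠ 0 ∧
      poch (1 + (p.1 - p.2.1 - p.2.2) - (1 + p.1 + p.2.1 - 3 * p.2.2) / 2) n ≠ 0 ∧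
      poch ((1 + p.1 + p.2.1 - 3 * p.2.2) / 2) n ≠ 0) :
    U n x y z = U n x z y ∧ U n x y z = U n y x z ∧ U n x y z = U n y z x ∧
      U n x y z = U n z x y ∧ U n x y z = U n z y x := by
  obtain ⟨h11, h12, h13⟩ := h (x, y, z) (by simp)
  obtain ⟨h21, h22, h23⟩ := h (x, z, y) (by simp)
  obtain ⟨h31, h32, h33⟩ := h (y, x, z) (by simp)
  obtain ⟨h41, h42, h43⟩ := h (y, z, x) (by simp)
  obtain ⟨h51, h52, h53⟩ := h (z, x, y) (by simp)
  obtain ⟨h61, h62, h63⟩ := h (z, y, x) (by simp)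
  set A : ℂ := (1 + y + z - 3 * x)/2 with hA
  set B : ℂ := (1 + x - 3 * y + z)/2 with hB
  set C : ℂ := (1 + x + y - 3 * z)/2 with hC
  have e1 : U n x y z = SymT n A B C := U_eq n x y z h11 h12 h13
  have e2 : U n x z y = SymT n A C B := by
    rw [U_eq n x z y h21 h22 h23]
    rw [show (1 + z + y - 3 * x)/2 = A by rw [hA]; ring,
      show (1 + x - 3 * z + y)/2 = C by rw [hC]; ring,
      show (1 + x + z - 3 * y)/2 = B by rw [hB]; ring]
  have e3 : U n y x z = SymT n B A C := by
    rw [U_eq n y x z h31 h32 h33]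
    rw [show (1 + x + z - 3 * y)/2 = B by rw [hB]; ring,
      show (1 + y - 3 * x + z)/2 = A by rw [hA]; ring,
      show (1 + y + x - 3 * z)/2 = C by rw [hC]; ring]
  have e4 : U n y z x = SymT n B C A := by
    rw [U_eq n y z x h41 h42 h43]
    rw [show (1 + z + x - 3 * y)/2 = B by rw [hB]; ring,
      show (1 + y - 3 * z + x)/2 = C by rw [hC]; ring,
      show (1 + y + z - 3 * x)/2 = A by rw [hA]]
  have e5 : U n z x y = SymT n C A B := by
    rw [U_eq n z x y h51 h52 h53]
    rw [show (1 + x + y - 3 * z)/2 = C by rw [hC],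
      show (1 + z - 3 * x + y)/2 = A by rw [hA]; ring,
      show (1 + z + x - 3 * y)/2 = B by rw [hB]; ring]
  have e6 : U n z y x = SymT n C B A := by
    rw [U_eq n z y x h61 h62 h63]
    rw [show (1 + y + x - 3 * z)/2 = C by rw [hC]; ring,
      show (1 + z - 3 * y + x)/2 = B by rw [hB]; ring,
      show (1 + z + y - 3 * x)/2 = A by rw [hA]; ring]
  refine ⟨?_, ?_, ?_, ?_, ?_⟩
  · rw [e1, e2, SymT_swap23]
  · rw [e1, e3, SymT_swap12]
  · rw [e1, e4, SymT_swap12 n A B C, SymT_swap23 n B A C]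
  · rw [e1, e5, SymT_swap23 n A B C, SymT_swap12 n A C B]
  · rw [e1, e6, SymT_swap23 n A B C, SymT_swap12 n A C B, SymT_swap23 n C A B]
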